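/- Let G be a group generated by a finite symmetric set, d ∈ D(G) an α-rough geodesic pseudometric, and n > α + 1 an integer such that S_n := {x ∈ G : d(x,1) ≤ n} generates G. Then for all x,y ∈ G: (n−1−α)·d_{S_n}(x,y) − (n−1) ≤ d(x,y) ≤ n·d_{S_n}(x,y). -/

import Mathlib

open Filter Set MeasureTheory Topology

noncomputable section

variable {X : Type*}

/-- The Gromov product `(x|y)_w` with respect to `d`. -/
def gp (d : X → X → ℝ) (w x y : X) : ℝ := (d x w + d y w - d x y) / 2

/-- `d` is a pseudometric. -/
def IsPseudometric (d : X → X → ℝ) : Prop :=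
  (∀ x, d x x = 0) ∧ (∀ x y, d x y = d y x) ∧ (∀ x y z, d x z ≤ d x y + d y z)

/-- `d` is `δ`-hyperbolic: the four-point Gromov product condition. -/
def GromovHyperbolic (d : X → X → ℝ) (δ : ℝ) : Prop :=
  ∀ x y z w, min (gp d w x y) (gp d w y z) - δ ≤ gp d w x z

/-- `d` is `α`-rough geodesic: any two points are joined by an `α`-rough geodesic. -/
def RoughGeodesic (d : X → X → ℝ) (α : ℝ) : Prop :=
  ∀ x y : X, ∃ (n : ℕ) (γ : ℕ → X), γ 0 = x ∧ γ n = y ∧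
    ∀ i j : ℕ, i ≤ n → j ≤ n →
      |(i : ℝ) - (j : ℝ)| - α ≤ d (γ i) (γ j) ∧ d (γ i) (γ j) ≤ |(i : ℝ) - (j : ℝ)| + α

variable {G : Type*} [Group G]

/-- Left invariance of a pseudometric on a group. -/
def LeftInvariant (d : G → G → ℝ) : Prop := ∀ g x y : G, d (g * x) (g * y) = d x y

/-- Word norm with respect to a subset `S`. -/
def wordNorm (S : Set G) (w : G) : ℕ :=
  sInf {k : ℕ | ∃ f : Fin k → G, (∀ i, f i ∈ S) ∧ (List.ofFn f).prod = w}

/-- Word metric with respect to a subset `S`. -/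
def wordDist (S : Set G) (x y : G) : ℝ := (wordNorm S (x⁻¹ * y) : ℝ)

/-- `S` is a symmetric generating set. -/
def GenSymm (S : Set G) : Prop := (∀ s ∈ S, s⁻¹ ∈ S) ∧ Subgroup.closure S = ⊤

/-- `d'` is quasi-isometric to `d` (via the identity map of `G`). -/
def QIsometric (d d' : G → G → ℝ) : Prop :=
  ∃ l1 l2 e : ℝ, 0 < l1 ∧ 0 < l2 ∧ 0 ≤ e ∧
    ∀ x y : G, d x y / l1 - e ≤ d' x y ∧ d' x y ≤ l2 * d x y + e

/-- Membership in `D(G)`: a left-invariant hyperbolic pseudometric on `G`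
quasi-isometric to a word metric w.r.t. a finite symmetric generating set. -/
def InD (d : G → G → ℝ) : Prop :=
  IsPseudometric d ∧ LeftInvariant d ∧ (∃ δ ≥ (0 : ℝ), GromovHyperbolic d δ) ∧
    ∃ S : Finset G, GenSymm (S : Set G) ∧ QIsometric (wordDist (S : Set G)) d

/-- `G` is a hyperbolic group: some word metric is Gromov hyperbolic. -/
def IsHyperbolicGroup (G : Type*) [Group G] : Prop :=
  ∃ S : Finset G, GenSymm (S : Set G) ∧ ∃ δ ≥ (0 : ℝ), GromovHyperbolic (wordDist (S : Set G)) δ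

/-- `G` is non-elementary: it is not virtually abelian. -/
def NonElementary (G : Type*) [Group G] : Prop :=
  ¬ ∃ H : Subgroup G, H.FiniteIndex ∧ ∀ a ∈ H, ∀ b ∈ H, a * b = b * a

/-- Translation length `ℓ_d(x) = lim_n d(x^n,1)/n`; by Fekete's subadditivity lemma the
limit exists and equals the infimum of `d(x^n,1)/n` over `n ≥ 1`. -/
def tlen (d : G → G → ℝ) (x : G) : ℝ :=
  sInf {r : ℝ | ∃ n : ℕ, r = d (x ^ (n + 1)) 1 / (n + 1)}

/-- Dilation `Dil(d,d') = sup_x ℓ_d(x)/ℓ_{d'}(x)` over infinite-order elements. -/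
def Dil (d d' : G → G → ℝ) : ℝ :=
  sSup {r : ℝ | ∃ x : G, ¬ IsOfFinOrder x ∧ r = tlen d x / tlen d' x}

/-- Critical exponent `h(d) = lim_n log|B_d(n)|/n` (the limit exists, so it equals
the limsup used here). -/
def hCrit (d : G → G → ℝ) : ℝ :=
  Filter.limsup (fun n : ℕ => Real.log (Set.ncard {x : G | d x 1 ≤ (n : ℝ)}) / (n : ℝ)) atTop

/-- `Λ(d1,d2)`: the infimum of `λ1·λ2` over quasi-isometry constants between `d1,d2`. -/
def Lam (d1 d2 : G → G → ℝ) : ℝ :=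
  sInf {l : ℝ | ∃ l1 l2 A : ℝ, 0 < l1 ∧ 0 < l2 ∧ 0 ≤ A ∧ l = l1 * l2 ∧
    ∀ x y : G, d2 x y / l1 - A ≤ d1 x y ∧ d1 x y ≤ l2 * d2 x y + A}

/-- Telescoping product. -/
lemma telescope_prod {G : Type*} [Group G] (k : ℕ) (g : ℕ → G) :
    (List.ofFn (fun j : Fin k => (g (j : ℕ))⁻¹ * g ((j : ℕ) + 1))).prod = (g 0)⁻¹ * g k := by
  induction k generalizing g with
  | zero => simp
  | succ k ih =>
    rw [List.ofFn_succ]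
    simp only [Fin.val_succ, Fin.val_zero, List.prod_cons]
    rw [ih (fun j => g (j + 1))]
    group

/-- Bound on the distance of a product from the identity. -/
lemma prod_dist_bound {G : Type*} [Group G] (d : G → G → ℝ)
    (htri : ∀ x y z, d x z ≤ d x y + d y z) (hrefl : ∀ x, d x x = 0)
    (hinv : LeftInvariant d) (c : ℝ) :
    ∀ L : List G, (∀ g ∈ L, d g 1 ≤ c) → d L.prod 1 ≤ c * L.length := by
  intro L
  induction L with
  | nil => intro _; simp [hrefl]
  | cons a L ih =>
    intro h
    have h1 : d (a * L.prod) 1 ≤ d (a * L.prod) a + d a 1 := htri _ _ _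
    have h2 : d (a * L.prod) a = d L.prod 1 := by
      have := hinv a L.prod 1
      simpa using this
    have h3 : d L.prod 1 ≤ c * L.length := ih (fun g hg => h g (List.mem_cons_of_mem a hg))
    have h4 : d a 1 ≤ c := h a List.mem_cons_self
    simp only [List.prod_cons, List.length_cons]
    push_cast
    rw [h2] at h1
    nlinarith

/-- If `d ∈ D(G)` is `α`-rough geodesic and `n > α + 1` is such that
the ball `S_n = B_d(n)` generates `G`, then
`(n−1−α)·d_{S_n}(x,y) − (n−1) ≤ d(x,y) ≤ n·d_{S_n}(x,y)`. -/
theorem word_metric_approximation (G : Type*) [Group G]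
    (d : G → G → ℝ) (hd : InD d) (α : ℝ) (hα : 0 ≤ α) (hrg : RoughGeodesic d α)
    (n : ℕ) (hn : α + 1 < (n : ℝ))
    (hgen : Subgroup.closure {x : G | d x 1 ≤ (n : ℝ)} = ⊤) :
    ∀ x y : G,
      ((n : ℝ) - 1 - α) * wordDist {x : G | d x 1 ≤ (n : ℝ)} x y - ((n : ℝ) - 1) ≤ d x y ∧
        d x y ≤ (n : ℝ) * wordDist {x : G | d x 1 ≤ (n : ℝ)} x y := by
  obtain ⟨⟨hrefl, hsymm, htri⟩, hinv, -⟩ := hd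
  have hnn : ∀ x y : G, 0 ≤ d x y := fun x y => by
    have h := htri x y x
    rw [hrefl, hsymm y x] at h; linarith
  set S : Set G := {x : G | d x 1 ≤ (n : ℝ)} with hS
  intro x y
  obtain ⟨m, γ, hγ0, hγm, hγ⟩ := hrg x y
  set s : ℕ := ⌈(n : ℝ) - 1 - α⌉₊ with hs_def
  have hs_pos : 1 ≤ s := Nat.one_le_ceil_iff.mpr (by linarith)
  have hs_le : ((n : ℝ) - 1 - α) ≤ (s : ℝ) := Nat.le_ceil _
  have hs_lt : (s : ℝ) < (n : ℝ) - α := by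
    have := Nat.ceil_lt_add_one (show (0:ℝ) ≤ (n : ℝ) - 1 - α by linarith)
    rw [← hs_def] at this; linarith
  set k : ℕ := (m + s - 1) / s with hk_def
  have hks1 : k * s ≤ m + s - 1 := Nat.div_mul_le_self _ _
  have hks2 : m ≤ k * s := by
    rcases Nat.lt_or_ge (k * s) m with h | h
    · exfalso
      have h2 : (k + 1) * s ≤ m + s - 1 := by
        have h1 : k * s + s ≤ m + s - 1 := by omega
        rwa [Nat.add_one_mul]
      have h3 : k + 1 ≤ (m + s - 1) / s := (Nat.le_div_iff_mul_le (by omega)).mpr h2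
      omega
    · exact h
  set φ : ℕ → ℕ := fun j => min (j * s) m with hφ
  have hφ0 : φ 0 = 0 := by simp [hφ]
  have hφk : φ k = m := by simp [hφ, hks2]
  have hφle : ∀ j, φ j ≤ m := fun j => min_le_right _ _
  have hφstep : ∀ j, φ j ≤ φ (j + 1) ∧ φ (j + 1) ≤ φ j + s := by
    intro j
    simp only [hφ, Nat.succ_mul]
    omega
  set f : Fin k → G := fun j => (γ (φ (j : ℕ)))⁻¹ * γ (φ ((j : ℕ) + 1)) with hf
  have hfS : ∀ j, f j ∈ S := by
    intro j
    have hd1 : d (f j) 1 = d (γ (φ ((j : ℕ) + 1))) (γ (φ (j : ℕ))) := by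
      have h := hinv (γ (φ (j : ℕ))) ((γ (φ (j : ℕ)))⁻¹ * γ (φ ((j : ℕ) + 1))) 1
      simpa [hf] using h.symm
    have hstep := hφstep (j : ℕ)
    have habs : |(φ ((j : ℕ) + 1) : ℝ) - (φ (j : ℕ) : ℝ)| ≤ (s : ℝ) := by
      have h1 : (φ (j : ℕ) : ℝ) ≤ (φ ((j : ℕ) + 1) : ℝ) := Nat.cast_le.mpr hstep.1
      have h2 : ((φ ((j : ℕ) + 1) : ℕ) : ℝ) ≤ ((φ (j : ℕ) + s : ℕ) : ℝ) :=
        Nat.cast_le.mpr hstep.2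
      push_cast at h2
      rw [abs_of_nonneg (by linarith)]
      linarith
    have hb := (hγ (φ ((j : ℕ) + 1)) (φ (j : ℕ)) (hφle _) (hφle _)).2
    show d (f j) 1 ≤ (n : ℝ)
    rw [hd1]
    linarith
  have hprod : (List.ofFn f).prod = x⁻¹ * y := by
    have := telescope_prod k (fun j => γ (φ j))
    rw [hf]
    rw [this, hφ0, hφk, hγ0, hγm]
  -- the word norm set
  set W : Set ℕ := {k : ℕ | ∃ f : Fin k → G, (∀ i, f i ∈ S) ∧ (List.ofFn f).prod = x⁻¹ * y}
    with hW
  have hkW : k ∈ W := ⟨f, hfS, hprod⟩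
  have hWne : W.Nonempty := ⟨k, hkW⟩
  have hwn_eq : wordDist S x y = ((sInf W : ℕ) : ℝ) := rfl
  have hwn_le : sInf W ≤ k := Nat.sInf_le hkW
  have hdxy : (m : ℝ) - α ≤ d x y := by
    have h := (hγ m 0 le_rfl (Nat.zero_le m)).1
    rw [hγ0, hγm, hsymm y x] at h
    simpa using h
  constructor
  · -- lower bound
    have hcast : ((m + s - 1 : ℕ) : ℝ) = (m : ℝ) + (s : ℝ) - 1 := by
      have : 1 ≤ m + s := by omega
      push_cast [Nat.cast_sub this]
      ring
    have h1 : (k : ℝ) * (s : ℝ) ≤ (m : ℝ) + (s : ℝ) - 1 := by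
      calc (k : ℝ) * (s : ℝ) = ((k * s : ℕ) : ℝ) := by push_cast; ring
        _ ≤ ((m + s - 1 : ℕ) : ℝ) := Nat.cast_le.mpr hks1
        _ = (m : ℝ) + (s : ℝ) - 1 := hcast
    have h2 : ((n : ℝ) - 1 - α) * (k : ℝ) ≤ (s : ℝ) * (k : ℝ) :=
      mul_le_mul_of_nonneg_right hs_le (Nat.cast_nonneg k)
    have h3 : ((n : ℝ) - 1 - α) * ((sInf W : ℕ) : ℝ) ≤ ((n : ℝ) - 1 - α) * (k : ℝ) :=
      mul_le_mul_of_nonneg_left (Nat.cast_le.mpr hwn_le) (by linarith)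
    rw [hwn_eq]
    nlinarith [mul_comm (s : ℝ) (k : ℝ)]
  · -- upper bound
    obtain ⟨f', hf'S, hf'prod⟩ := Nat.sInf_mem hWne
    have hxy : d x y = d (x⁻¹ * y) 1 := by
      have h := hinv x⁻¹ x y
      simp only [inv_mul_cancel] at h
      rw [← h, hsymm]
    have hb := prod_dist_bound d htri hrefl hinv (n : ℝ) (List.ofFn f')
      (fun g hg => by
        obtain ⟨i, rfl⟩ := List.mem_ofFn.mp hg
        exact hf'S i)
    rw [hf'prod, List.length_ofFn] at hb
    rw [hxy, hwn_eq]
    exact hb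

end
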